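/- Let L, N ≥ 0, let f ∈ F_L, η ∈ E_N, u = f + η, and fix t > 0. For 0 < T ≤ t and σ ∈ [0, T] define Q(t, T, σ) = u(t − σ) − u(t) + ((u(t) − u(t − T))/T)·σ. Then |Q(t, T, σ)| ≤ 2N + L·σ·(T − σ)/2 holds for all T ∈ (0, t] and all σ ∈ [0, T]. -/

import Mathlib

open Set Filter Topology

/-- `f ∈ F_L`: `f : [0,∞) → ℝ` is differentiable with derivative `f'`
that is Lipschitz continuous with constant `L` on `[0,∞)`. -/
def IsFL (L : ℝ) (f f' : ℝ → ℝ) : Prop :=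
  (∀ t ∈ Set.Ici (0:ℝ), HasDerivWithinAt f (f' t) (Set.Ici 0) t) ∧
  ∀ s ∈ Set.Ici (0:ℝ), ∀ t ∈ Set.Ici (0:ℝ), |f' s - f' t| ≤ L * |s - t|

/-- `η ∈ E_N`: measurable noise bounded by `N` on `[0,∞)`. -/
def IsEN (N : ℝ) (η : ℝ → ℝ) : Prop :=
  Measurable η ∧ ∀ t ∈ Set.Ici (0:ℝ), |η t| ≤ N

/-- `f ∈ F_L^R`: member of `F_L` with `|f(0)| ≤ R` and `|ḟ(0)| ≤ R`. -/
def IsFLR (L R : ℝ) (f f' : ℝ → ℝ) : Prop :=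
  IsFL L f f' ∧ |f 0| ≤ R ∧ |f' 0| ≤ R

/-- A differentiator is causal if its output at time `T` depends only on the
input on `[0, T]`. -/
def Causal (D : (ℝ → ℝ) → ℝ → ℝ) : Prop :=
  ∀ u₁ u₂ T, (∀ t ∈ Set.Icc (0:ℝ) T, u₁ t = u₂ t) → D u₁ T = D u₂ T


lemma taylor_fwd {L : ℝ} {f f' : ℝ → ℝ} {x y : ℝ} (hxy : x ≤ y)
    (hd : ∀ s ∈ Set.Icc x y, HasDerivWithinAt f (f' s) (Set.Icc x y) s)
    (hlip : ∀ s ∈ Set.Icc x y, |f' s - f' x| ≤ L * (s - x)) :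
    |f y - f x - f' x * (y - x)| ≤ L / 2 * (y - x) ^ 2 := by
  have hcf : ContinuousOn f (Icc x y) := fun s hs => (hd s hs).continuousWithinAt
  -- generic monotonicity helper
  have key : ∀ (c : ℝ), (∀ s ∈ Icc x y, |f' s - f' x| ≤ L * (s - x)) → True := fun _ _ => trivial
  have mono : ∀ (ε : ℝ), ε = 1 ∨ ε = -1 →
      ε * (f y - f x - f' x * (y - x)) ≤ L / 2 * (y - x) ^ 2 := by
    intro ε hε
    set φ : ℝ → ℝ := fun s => L / 2 * (s - x) ^ 2 - ε * (f s - f x - f' x * (s - x)) with hφ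
    have hmono : MonotoneOn φ (Icc x y) := by
      apply monotoneOn_of_hasDerivWithinAt_nonneg (convex_Icc x y)
        (f' := fun s => L * (s - x) - ε * (f' s - f' x))
      · apply ContinuousOn.sub
        · exact (continuousOn_const.mul (((continuousOn_id.sub continuousOn_const).pow 2)))
        · exact continuousOn_const.mul ((hcf.sub continuousOn_const).sub
            (continuousOn_const.mul (continuousOn_id.sub continuousOn_const)))
      · intro s hs
        rw [interior_Icc] at hs ⊢
        have hdf : HasDerivWithinAt f (f' s) (Ioo x y) s :=
          (hd s (Ioo_subset_Icc_self hs)).mono Ioo_subset_Icc_self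
        have h1 : HasDerivAt (fun s => L / 2 * (s - x) ^ 2) (L * (s - x)) s := by
          have := (((hasDerivAt_id s).sub_const x).pow 2).const_mul (L / 2)
          refine this.congr_deriv ?_
          simp [id]
          ring
        have h2 : HasDerivWithinAt (fun s => ε * (f s - f x - f' x * (s - x)))
            (ε * (f' s - f' x)) (Ioo x y) s := by
          have hlin : HasDerivAt (fun s => f' x * (s - x)) (f' x) s := by
            have := ((hasDerivAt_id s).sub_const x).const_mul (f' x)
            refine this.congr_deriv ?_
            ring
          exact (((hdf.sub_const (f x)).sub hlin.hasDerivWithinAt).const_mul ε)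
        exact (h1.hasDerivWithinAt).sub h2
      · intro s hs
        rw [interior_Icc] at hs
        have hb := hlip s (Ioo_subset_Icc_self hs)
        have : ε * (f' s - f' x) ≤ |f' s - f' x| := by
          rcases hε with h | h <;> rw [h]
          · simpa using le_abs_self (f' s - f' x)
          · simpa [neg_one_mul] using neg_le_abs (f' s - f' x)
        linarith
    have h0 : φ x ≤ φ y := hmono (left_mem_Icc.mpr hxy) (right_mem_Icc.mpr hxy) hxy
    have : φ x = 0 := by simp [hφ]
    rw [this] at h0
    simp only [hφ] at h0
    linarith
  have h1 := mono 1 (Or.inl rfl)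
  have h2 := mono (-1) (Or.inr rfl)
  rw [abs_le]
  constructor <;> linarith

lemma taylor_bwd {L : ℝ} {f f' : ℝ → ℝ} {x y : ℝ} (hxy : y ≤ x)
    (hd : ∀ s ∈ Set.Icc y x, HasDerivWithinAt f (f' s) (Set.Icc y x) s)
    (hlip : ∀ s ∈ Set.Icc y x, |f' s - f' x| ≤ L * (x - s)) :
    |f y - f x - f' x * (y - x)| ≤ L / 2 * (y - x) ^ 2 := by
  set g : ℝ → ℝ := fun s => f (x + y - s) with hg
  set g' : ℝ → ℝ := fun s => -f' (x + y - s) with hg'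
  have hmaps : ∀ s ∈ Icc y x, x + y - s ∈ Icc y x := by
    intro s hs
    exact ⟨by linarith [hs.2], by linarith [hs.1]⟩
  have hdg : ∀ s ∈ Set.Icc y x, HasDerivWithinAt g (g' s) (Set.Icc y x) s := by
    intro s hs
    have hi : HasDerivWithinAt (fun s => x + y - s) (-1) (Icc y x) s := by
      simpa using ((hasDerivAt_id s).const_sub (x + y)).hasDerivWithinAt
    have := (hd _ (hmaps s hs)).comp s hi (fun u hu => hmaps u hu)
    simpa [hg, hg', Function.comp_def, mul_comm] using this
  have hlg : ∀ s ∈ Set.Icc y x, |g' s - g' y| ≤ L * (s - y) := by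
    intro s hs
    have := hlip _ (hmaps s hs)
    have e : g' s - g' y = -(f' (x + y - s) - f' x) := by
      simp only [hg']
      have : x + y - y = x := by ring
      rw [this]
      ring
    rw [e, abs_neg]
    calc |f' (x + y - s) - f' x| ≤ L * (x - (x + y - s)) := this
      _ = L * (s - y) := by ring
  have := taylor_fwd hxy hdg hlg
  have e1 : g x = f y := by simp [hg]
  have e2 : g y = f x := by simp [hg]
  have e3 : g' y = -f' x := by simp [hg']
  rw [e1, e2, e3] at this
  calc |f y - f x - f' x * (y - x)| = |f y - f x - -f' x * (x - y)| := by ring_nf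
    _ ≤ L / 2 * (x - y) ^ 2 := this
    _ = L / 2 * (y - x) ^ 2 := by ring

theorem stmt10 (L N : ℝ) (hL : 0 ≤ L) (hN : 0 ≤ N)
    (f f' η u : ℝ → ℝ) (hf : IsFL L f f') (hη : IsEN N η) (hu : u = f + η)
    (t : ℝ) (ht : 0 < t)
    (Q : ℝ → ℝ → ℝ)
    (hQ : ∀ T σ : ℝ, Q T σ = u (t - σ) - u t + ((u t - u (t - T)) / T) * σ) :
    ∀ T : ℝ, 0 < T → T ≤ t → ∀ σ ∈ Set.Icc (0:ℝ) T,
      |Q T σ| ≤ 2 * N + L * σ * (T - σ) / 2 := by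
  intro T hT0 hTt σ hσ
  obtain ⟨hσ0, hσT⟩ := hσ
  set a := t - T with ha
  set b := t with hb
  set x := t - σ with hx
  have ha0 : (0:ℝ) ≤ a := by simp [ha]; linarith
  have hax : a ≤ x := by simp [ha, hx]; linarith
  have hxb : x ≤ b := by simp [hx, hb]; linarith
  have hx0 : (0:ℝ) ≤ x := le_trans ha0 hax
  have hb0 : (0:ℝ) ≤ b := le_trans hx0 hxb
  -- Taylor bounds for f centered at x
  have hRb : |f b - f x - f' x * (b - x)| ≤ L / 2 * (b - x) ^ 2 := by
    refine taylor_fwd (L := L) (f := f) (f' := f') hxb ?_ ?_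
    · intro s hs
      exact (hf.1 s (le_trans hx0 hs.1)).mono (fun z hz => le_trans hx0 hz.1)
    · intro s hs
      have := hf.2 s (le_trans hx0 hs.1) x hx0
      rwa [abs_of_nonneg (by linarith [hs.1] : (0:ℝ) ≤ s - x)] at this
  have hRa : |f a - f x - f' x * (a - x)| ≤ L / 2 * (a - x) ^ 2 := by
    refine taylor_bwd (L := L) (f := f) (f' := f') hax ?_ ?_
    · intro s hs
      exact (hf.1 s (le_trans ha0 hs.1)).mono (fun z hz => le_trans ha0 hz.1)
    · intro s hs
      have := hf.2 s (le_trans ha0 hs.1) x hx0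
      rwa [abs_sub_comm (s : ℝ) x, abs_of_nonneg (by linarith [hs.2] : (0:ℝ) ≤ x - s)] at this
  -- bound the f-part
  set Qf := f x - f b + ((f b - f a) / T) * σ with hQf
  have hid : Qf * T = -(σ * (f a - f x - f' x * (a - x))) - ((T - σ) * (f b - f x - f' x * (b - x))) := by
    have e1 : a - x = -(T - σ) := by simp [ha, hx]; linarith
    have e2 : b - x = σ := by simp [hb, hx]
    rw [hQf, e1, e2]
    field_simp
    ring
  have hQfb : |Qf| ≤ L * σ * (T - σ) / 2 := by
    have h1 : |Qf| * T = |Qf * T| := by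
      rw [abs_mul, abs_of_pos hT0]
    have h2 : |Qf * T| ≤ σ * (L / 2 * (a - x) ^ 2) + (T - σ) * (L / 2 * (b - x) ^ 2) := by
      rw [hid]
      calc |-(σ * (f a - f x - f' x * (a - x))) - (T - σ) * (f b - f x - f' x * (b - x))|
          ≤ |σ * (f a - f x - f' x * (a - x))| + |(T - σ) * (f b - f x - f' x * (b - x))| := by
            rw [← abs_neg (σ * _)] ; exact abs_sub _ _
        _ ≤ σ * (L / 2 * (a - x) ^ 2) + (T - σ) * (L / 2 * (b - x) ^ 2) := by
            rw [abs_mul, abs_mul, abs_of_nonneg hσ0, abs_of_nonneg (by linarith : (0:ℝ) ≤ T - σ)]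
            exact add_le_add (mul_le_mul_of_nonneg_left hRa hσ0)
              (mul_le_mul_of_nonneg_left hRb (by linarith))
    have e1 : a - x = -(T - σ) := by simp [ha, hx]; linarith
    have e2 : b - x = σ := by simp [hb, hx]
    rw [e1, e2] at h2
    have h3 : |Qf| * T ≤ (L * σ * (T - σ) / 2) * T := by
      rw [h1]
      calc |Qf * T| ≤ σ * (L / 2 * (-(T - σ)) ^ 2) + (T - σ) * (L / 2 * σ ^ 2) := h2
        _ = (L * σ * (T - σ) / 2) * T := by ring
    exact le_of_mul_le_mul_right (by linarith) hT0
  -- bound the noise part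
  set Qe := η x - η b + ((η b - η a) / T) * σ with hQe
  have hQeb : |Qe| ≤ 2 * N := by
    have hTne : T ≠ 0 := ne_of_gt hT0
    have hdecomp : Qe = (1 - σ / T) * (η x - η b) + (σ / T) * (η x - η a) := by
      rw [hQe]; field_simp; ring
    have hna : |η a| ≤ N := hη.2 a ha0
    have hnx : |η x| ≤ N := hη.2 x hx0
    have hnb : |η b| ≤ N := hη.2 b hb0
    have hc1 : (0:ℝ) ≤ 1 - σ / T := by
      have : σ / T ≤ 1 := (div_le_one hT0).mpr hσT
      linarith
    have hc2 : (0:ℝ) ≤ σ / T := div_nonneg hσ0 (le_of_lt hT0)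
    rw [hdecomp]
    calc |(1 - σ / T) * (η x - η b) + (σ / T) * (η x - η a)|
        ≤ |(1 - σ / T) * (η x - η b)| + |(σ / T) * (η x - η a)| := abs_add_le _ _
      _ = (1 - σ / T) * |η x - η b| + (σ / T) * |η x - η a| := by
          rw [abs_mul, abs_mul, abs_of_nonneg hc1, abs_of_nonneg hc2]
      _ ≤ (1 - σ / T) * (2 * N) + (σ / T) * (2 * N) := by
          apply add_le_add
          · exact mul_le_mul_of_nonneg_left (by calc |η x - η b| ≤ |η x| + |η b| := abs_sub _ _
              _ ≤ 2 * N := by linarith) hc1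
          · exact mul_le_mul_of_nonneg_left (by calc |η x - η a| ≤ |η x| + |η a| := abs_sub _ _
              _ ≤ 2 * N := by linarith) hc2
      _ = 2 * N := by ring
  -- combine
  have hQsplit : Q T σ = Qe + Qf := by
    rw [hQ, hu, hQe, hQf]
    simp only [Pi.add_apply]
    rw [← ha]
    ring
  rw [hQsplit]
  calc |Qe + Qf| ≤ |Qe| + |Qf| := abs_add_le _ _
    _ ≤ 2 * N + L * σ * (T - σ) / 2 := add_le_add hQeb hQfb
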